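/- Let G₁, …, G_k be groups (k ≥ 1) and for each i let t_i ∈ G_i be an element not lying in the center of G_i. Suppose that for each i, every quotient of G_i/Z(G_i) by a nontrivial normal subgroup is a solvable group. If f : G₁ × ⋯ × G_k → Q is a surjective group homomorphism with f(t₁, …, t_k) = 1, then Q is solvable. -/

import Mathlib

private lemma isSolvable_pi_fin : ∀ (n : ℕ) (H : Fin n → Type*) [∀ i, Group (H i)],
    (∀ i, IsSolvable (H i)) → IsSolvable (∀ i, H i) := by
  intro n
  induction n with
  | zero =>
    intro H _ _
    exact isSolvable_of_comm fun a b => by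
      funext i; exact i.elim0
  | succ n ih =>
    intro H _ hs
    let φ : (∀ i, H i) →* (H 0 × ∀ i : Fin n, H i.succ) :=
      { toFun := fun x => (x 0, fun i => x i.succ)
        map_one' := rfl
        map_mul' := fun x y => rfl }
    haveI : Group.IsSolvable (∀ i : Fin n, H i.succ) := ih _ (fun i => hs i.succ)
    haveI : Group.IsSolvable (H 0) := hs 0
    haveI : Group.IsSolvable (H 0 × ∀ i : Fin n, H i.succ) := inferInstance
    refine solvable_of_solvable_injective (f := φ) ?_
    intro x y h
    funext i
    refine Fin.cases ?_ ?_ i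
    · exact congrArg Prod.fst h
    · exact fun j => congrFun (congrArg Prod.snd h) j

/-- Let `G₁, …, G_k` (`k ≥ 1`) be groups, and `t i ∈ G i` noncentral elements.
Suppose every quotient of `G i ⧸ Z(G i)` by a nontrivial normal subgroup is
solvable. If `f : G₁ × ⋯ × G_k → Q` is a surjective homomorphism killing
`(t₁, …, t_k)`, then `Q` is solvable. -/
theorem solvable_quotient_of_product (k : ℕ) (hk : 1 ≤ k)
    (G : Fin k → Type*) [∀ i, Group (G i)]
    (t : ∀ i, G i) (ht : ∀ i, t i ∉ Subgroup.center (G i))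
    (hsolv : ∀ (i : Fin k)
      (N : Subgroup ((G i) ⧸ Subgroup.center (G i))) [N.Normal], N ≠ ⊥ →
      IsSolvable (((G i) ⧸ Subgroup.center (G i)) ⧸ N))
    (Q : Type*) [Group Q] (f : (∀ i, G i) →* Q)
    (hf : Function.Surjective f) (h1 : f t = 1) :
    IsSolvable Q := by
  classical
  -- the coordinate homomorphisms
  set fi : ∀ i, G i →* Q := fun i => f.comp (MonoidHom.mulSingle G i) with hfi
  -- images of elements with disjoint supports commute
  have hdisj : ∀ (x y : ∀ j, G j), (∀ j, x j = 1 ∨ y j = 1) → Commute (f x) (f y) := by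
    intro x y h
    have hxy : x * y = y * x := by
      funext j
      rcases h j with h | h <;> simp [h]
    show f x * f y = f y * f x
    rw [← map_mul, ← map_mul, hxy]
  -- centrality criterion
  have hcen : ∀ (i : Fin k) (z : G i),
      (∀ x : G i, Commute (f (Pi.mulSingle i z)) (f (Pi.mulSingle i x))) →
      f (Pi.mulSingle i z) ∈ Subgroup.center Q := by
    intro i z hz
    rw [Subgroup.mem_center_iff]
    intro q
    obtain ⟨g, rfl⟩ := hf q
    have hdecomp : Pi.mulSingle i (g i) * ((Pi.mulSingle i (g i))⁻¹ * g) = g := by group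
    have h1' : Commute (f (Pi.mulSingle i z)) (f ((Pi.mulSingle i (g i))⁻¹ * g)) := by
      apply hdisj
      intro j
      by_cases hij : j = i
      · subst hij; right; simp
      · left; exact Pi.mulSingle_eq_of_ne hij z
    have h2' := (hz (g i)).mul_right h1'
    rw [← map_mul, hdecomp] at h2'
    exact h2'.eq.symm
  -- central elements map to central elements
  have hcenZ : ∀ (i : Fin k) (z : G i), z ∈ Subgroup.center (G i) →
      f (Pi.mulSingle i z) ∈ Subgroup.center Q := by
    intro i z hz
    apply hcen
    intro x
    have hzx : Commute z x := ((Subgroup.mem_center_iff.mp hz) x).symm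
    exact (hzx.map (MonoidHom.mulSingle G i)).map f
  -- the key point: f (mulSingle i (t i)) is central in Q
  have hcent : ∀ i, f (Pi.mulSingle i (t i)) ∈ Subgroup.center Q := by
    intro i
    apply hcen
    intro x
    have hs : f (t * (Pi.mulSingle i (t i))⁻¹) = (f (Pi.mulSingle i (t i)))⁻¹ := by
      rw [map_mul, h1, one_mul, map_inv]
    have hts : Commute (f (t * (Pi.mulSingle i (t i))⁻¹)) (f (Pi.mulSingle i x)) := by
      apply hdisj
      intro j
      by_cases hij : j = i
      · subst hij; left; simp
      · right; exact Pi.mulSingle_eq_of_ne hij x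
    rw [hs] at hts
    simpa using hts.inv_left
  -- the induced maps on central quotients
  have hker1 : ∀ i, ∀ z ∈ Subgroup.center (G i),
      ((QuotientGroup.mk' (Subgroup.center Q)).comp (fi i)) z = 1 := by
    intro i z hz
    rw [MonoidHom.comp_apply, ← MonoidHom.mem_ker, QuotientGroup.ker_mk']
    exact hcenZ i z hz
  set ψ : ∀ i, (G i ⧸ Subgroup.center (G i)) →* (Q ⧸ Subgroup.center Q) :=
    fun i => QuotientGroup.lift _ ((QuotientGroup.mk' (Subgroup.center Q)).comp (fi i))
      (hker1 i) with hψ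
  -- each ψ i has nontrivial kernel
  have hkert : ∀ i, (ψ i).ker ≠ ⊥ := by
    intro i hbot
    have hmem : ((t i : G i ⧸ Subgroup.center (G i))) ∈ (ψ i).ker := by
      rw [MonoidHom.mem_ker]
      show QuotientGroup.mk (f (Pi.mulSingle i (t i))) = 1
      rw [QuotientGroup.eq_one_iff]
      exact hcent i
    rw [hbot, Subgroup.mem_bot] at hmem
    exact ht i ((QuotientGroup.eq_one_iff (t i)).mp hmem)
  have hsolvH : ∀ i, IsSolvable ((G i ⧸ Subgroup.center (G i)) ⧸ (ψ i).ker) :=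
    fun i => hsolv i (ψ i).ker (hkert i)
  -- the induced injective-on-quotient maps
  set Φi : ∀ i, ((G i ⧸ Subgroup.center (G i)) ⧸ (ψ i).ker) →* (Q ⧸ Subgroup.center Q) :=
    fun i => QuotientGroup.kerLift (ψ i) with hΦi
  have hΦmk : ∀ (i : Fin k) (a : G i),
      Φi i (QuotientGroup.mk (QuotientGroup.mk a)) =
        QuotientGroup.mk (f (Pi.mulSingle i a)) := fun i a => rfl
  have hcommΦ : Pairwise fun i j => ∀ x y, Commute (Φi i x) (Φi j y) := by
    intro i j hij x y
    induction x using QuotientGroup.induction_on with | H x =>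
    induction x using QuotientGroup.induction_on with | H a =>
    induction y using QuotientGroup.induction_on with | H y =>
    induction y using QuotientGroup.induction_on with | H b =>
    rw [hΦmk i a, hΦmk j b]
    have hc : Commute (f (Pi.mulSingle i a)) (f (Pi.mulSingle j b)) := by
      apply hdisj
      intro l
      by_cases hl : l = i
      · right; subst hl; exact Pi.mulSingle_eq_of_ne hij b
      · left; exact Pi.mulSingle_eq_of_ne hl a
    exact hc.map (QuotientGroup.mk' (Subgroup.center Q))
  -- the big map is surjective
  have hsurj : Function.Surjective (MonoidHom.noncommPiCoprod Φi hcommΦ) := by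
    intro q
    induction q using QuotientGroup.induction_on with | H q =>
    obtain ⟨g, rfl⟩ := hf q
    refine ⟨fun i => QuotientGroup.mk (QuotientGroup.mk (g i)), ?_⟩
    rw [MonoidHom.noncommPiCoprod_apply]
    have e1 := Finset.noncommProd_mulSingle g
    have e2 := Finset.univ.map_noncommProd (fun i => Pi.mulSingle i (g i))
      (fun i _ j _ h => Pi.mulSingle_apply_commute g i j)
      ((QuotientGroup.mk' (Subgroup.center Q)).comp f)
    rw [e1] at e2
    show _ = ((QuotientGroup.mk' (Subgroup.center Q)).comp f) g
    rw [e2]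
    exact Finset.noncommProd_congr rfl (fun i _ => hΦmk i (g i)) _
  -- conclude
  haveI : Group.IsSolvable (∀ i, (G i ⧸ Subgroup.center (G i)) ⧸ (ψ i).ker) :=
    isSolvable_pi_fin k _ hsolvH
  haveI hQZ : Group.IsSolvable (Q ⧸ Subgroup.center Q) := solvable_of_surjective hsurj
  haveI : Group.IsSolvable (Subgroup.center Q) := isSolvable_of_comm fun a b => Subtype.ext (Subgroup.mem_center_iff.mp b.2 a.1)
  exact solvable_of_ker_le_range (Subgroup.center Q).subtype
    (QuotientGroup.mk' (Subgroup.center Q))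
    (by rw [QuotientGroup.ker_mk', Subgroup.range_subtype])
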